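/- Every connected 4-regular finite simple graph of order at least seven has a foresty minimum vertex cut, i.e., a vertex cut S with |S| = κ(G) such that the induced subgraph G[S] is a forest. -/

import Mathlib

open SimpleGraph

/-- `S` is a vertex cut of `G`: a proper subset of the vertex set whose removal
disconnects the graph. -/
def IsVertexCut {V : Type*} [Fintype V] (G : SimpleGraph V) (S : Finset V) : Prop :=
  (S : Set V) ≠ Set.univ ∧ ¬ (G.induce ((S : Set V)ᶜ)).Connected

/-- The connectivity `κ(G)`: the minimum cardinality of a vertex cut of `G`. -/
noncomputable def graphConnectivity {V : Type*} [Fintype V] (G : SimpleGraph V) : ℕ :=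
  sInf {k | ∃ S : Finset V, IsVertexCut G S ∧ S.card = k}

namespace ForestyAux

variable {V : Type*} [Fintype V] [DecidableEq V] {G : SimpleGraph V}

lemma walk_closed {W : Type*} {H : SimpleGraph W} (X : Set W)
    (hX : ∀ x ∈ X, ∀ y, H.Adj x y → y ∈ X) :
    ∀ (a b : W), H.Walk a b → a ∈ X → b ∈ X := by
  intro a b q
  induction q with
  | nil => exact id
  | cons h q ih => intro ha; exact ih (hX _ ha _ h)

/-- Build a vertex cut from a closed set. -/
lemma mk_cut (T : Finset V) (X : Set V)
    (hcl : ∀ x ∈ X, ∀ y, G.Adj x y → y ∉ T → y ∈ X)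
    (p : V) (hpX : p ∈ X) (hpT : p ∉ T)
    (w : V) (hwX : w ∉ X) (hwT : w ∉ T) : IsVertexCut G T := by
  constructor
  · intro h
    have : p ∈ (T : Set V) := h ▸ Set.mem_univ p
    exact hpT this
  · intro hc
    have hreach := hc.preconnected ⟨p, by simpa using hpT⟩ ⟨w, by simpa using hwT⟩
    obtain ⟨q⟩ := hreach
    have := walk_closed (H := G.induce ((T : Set V)ᶜ)) {z | (z : V) ∈ X}
      (by
        rintro ⟨x, hx⟩ hxX ⟨y, hy⟩ hadj
        have : G.Adj x y := by simpa using hadj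
        exact hcl x hxX y this (by simpa using hy)) _ _ q hpX
    exact hwX this

/-- From a vertex cut, get a separation of the complement into two nonempty pieces
with no edges in between. -/
lemma sep_of_cut (T : Finset V) (h : IsVertexCut G T) :
    ∃ A B : Set V, A.Nonempty ∧ B.Nonempty ∧
      (∀ v, v ∉ T → (v ∈ A ∨ v ∈ B)) ∧ (∀ a ∈ A, a ∉ T) ∧ (∀ b ∈ B, b ∉ T) ∧
      (∀ a ∈ A, a ∉ B) ∧ (∀ a ∈ A, ∀ b ∈ B, ¬ G.Adj a b) := by
  obtain ⟨hne, hnc⟩ := h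
  have hx0 : ∃ x : V, x ∉ T := by
    by_contra hall
    push_neg at hall
    exact hne (by ext x; simpa using hall x)
  obtain ⟨x0, hx0⟩ := hx0
  have hnonempty : Nonempty ((T : Set V)ᶜ : Set V) := ⟨⟨x0, by simpa using hx0⟩⟩
  rw [connected_iff] at hnc
  push_neg at hnc
  have hpc : ¬ (G.induce ((T : Set V)ᶜ)).Preconnected := fun hp => not_isEmpty_iff.mpr hnonempty (hnc hp)
  rw [Preconnected] at hpc
  push_neg at hpc
  obtain ⟨u, v, huv⟩ := hpc
  have hvT : (v : V) ∉ T := by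
    have h := v.2; rw [Set.mem_compl_iff, Finset.mem_coe] at h; exact h
  refine ⟨{x | ∃ hx : x ∈ ((T : Set V)ᶜ), (G.induce ((T : Set V)ᶜ)).Reachable u ⟨x, hx⟩},
    {x | x ∉ T ∧ ¬ ∃ hx : x ∈ ((T : Set V)ᶜ), (G.induce ((T : Set V)ᶜ)).Reachable u ⟨x, hx⟩},
    ⟨u, u.2, by rfl⟩, ⟨v, hvT, ?_⟩, ?_, ?_, ?_, ?_, ?_⟩
  · intro ⟨hv, hr⟩
    have : (⟨(v:V), hv⟩ : ((T : Set V)ᶜ : Set V)) = v := Subtype.ext rfl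
    exact huv (this ▸ hr)
  · intro w hw
    by_cases hr : ∃ hx : w ∈ ((T : Set V)ᶜ), (G.induce ((T : Set V)ᶜ)).Reachable u ⟨w, hx⟩
    · exact Or.inl hr
    · exact Or.inr ⟨hw, hr⟩
  · rintro a ⟨ha, -⟩; simpa using ha
  · rintro b ⟨hb, -⟩; exact hb
  · rintro a ⟨ha, hr⟩ ⟨-, hb⟩; exact hb ⟨ha, hr⟩
  · rintro a ⟨ha, hr⟩ b ⟨hbT, hb⟩ hadj
    have hbc : b ∈ ((T : Set V)ᶜ) := by simpa using hbT
    refine hb ⟨hbc, hr.trans (Adj.reachable ?_)⟩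
    simpa using hadj

lemma cycle_structure {W : Type*} [Fintype W] (H : SimpleGraph W) (hW : Fintype.card W ≤ 4)
    (h : ¬ H.IsAcyclic) :
    (∃ x y z : W, H.Adj x y ∧ H.Adj y z ∧ H.Adj z x) ∨
    (∃ w x y z : W, H.Adj w x ∧ H.Adj x y ∧ H.Adj y z ∧ H.Adj z w ∧ w ≠ y ∧ x ≠ z) := by
  rw [IsAcyclic] at h
  push_neg at h
  obtain ⟨v, c, hc⟩ := h
  have h3 := hc.three_le_length
  have h4 : c.length ≤ 4 := by
    have hnd := hc.support_nodup
    have hlen := List.Nodup.length_le_card hnd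
    have h5 : c.support.length = c.length + 1 := SimpleGraph.Walk.length_support c
    have h6 : c.support.tail.length = c.support.length - 1 := List.length_tail
    omega
  cases c with
  | nil => simp at h3
  | cons h1 c =>
    cases c with
    | nil => simp at h3
    | cons h2 c =>
      cases c with
      | nil => simp at h3
      | cons h3' c =>
        cases c with
        | nil => exact Or.inl ⟨_, _, _, h1, h2, h3'⟩
        | cons h4' c =>
          cases c with
          | nil =>
            right
            have hnd := hc.support_nodup
            simp [SimpleGraph.Walk.support_cons] at hnd
            exact ⟨_, _, _, _, h1, h2, h3', h4', by tauto, by tauto⟩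
          | cons h5' c => simp at h4; omega

lemma exists_outside (h7 : 7 ≤ Fintype.card V) (T : Finset V) (hT : T.card ≤ 6) :
    ∃ w, w ∉ T := by
  by_contra h
  push_neg at h
  have hsub : (Finset.univ : Finset V) ⊆ T := fun x _ => h x
  have := Finset.card_le_card hsub
  rw [Finset.card_univ] at this
  omega

/-- An isolating vertex cut: all the neighbours of `v` lie in `T`. -/
lemma iso_cut (h7 : 7 ≤ Fintype.card V) (T : Finset V) (v : V)
    (hnbr : ∀ y, G.Adj v y → y ∈ T) (hv : v ∉ T) (hcard : T.card ≤ 5) :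
    IsVertexCut G T := by
  obtain ⟨w, hw⟩ := exists_outside h7 (insert v T)
    (le_trans (Finset.card_insert_le _ _) (by omega))
  simp only [Finset.mem_insert, not_or] at hw
  refine mk_cut T {v} ?_ v rfl hv w (by simp [hw.1]) hw.2
  rintro x rfl y hadj hyT
  exact absurd (hnbr y hadj) hyT

/-- Every vertex of a minimum cut has a neighbour in each side. -/
lemma nbr_side (S0 : Finset V)
    (hmin : ∀ T : Finset V, IsVertexCut G T → S0.card ≤ T.card)
    (A B : Set V) (hA : A.Nonempty)
    (hcov : ∀ v, v ∉ S0 → v ∈ A ∨ v ∈ B)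
    (hAS : ∀ a ∈ A, a ∉ S0) (hBS : ∀ b ∈ B, b ∉ S0)
    (hnoe : ∀ a ∈ A, ∀ b ∈ B, ¬ G.Adj a b)
    (s : V) (hs : s ∈ S0) : ∃ a ∈ A, G.Adj s a := by
  by_contra hno
  push_neg at hno
  have hcut : IsVertexCut G (S0.erase s) := by
    obtain ⟨a0, ha0⟩ := hA
    refine mk_cut (S0.erase s) A ?_ a0 ha0 (fun h => hAS a0 ha0 (Finset.mem_of_mem_erase h))
      s (fun h => hAS s h hs) (Finset.notMem_erase s S0)
    intro x hx y hxy hyT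
    by_cases hyS : y ∈ S0
    · have hys : y = s := by
        by_contra hne
        exact hyT (Finset.mem_erase.mpr ⟨hne, hyS⟩)
      subst hys
      exact absurd hxy.symm (hno x hx)
    · rcases hcov y hyS with h | h
      · exact h
      · exact absurd hxy (hnoe x hx y h)
  have hle := hmin _ hcut
  rw [Finset.card_erase_of_mem hs] at hle
  have : 0 < S0.card := Finset.card_pos.mpr ⟨s, hs⟩
  omega

/-- Four distinct elements cannot fit inside a 3-element finset. -/
lemma four_in_three (T : Finset V) (hT : T.card = 3) (w x y z : V)
    (hw : w ∈ T) (hx : x ∈ T) (hy : y ∈ T) (hz : z ∈ T)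
    (h1 : w ≠ x) (h2 : w ≠ y) (h3 : w ≠ z) (h4 : x ≠ y) (h5 : x ≠ z) (h6 : y ≠ z) :
    False := by
  classical
  have hsub : ({w, x, y, z} : Finset V) ⊆ T := by
    intro a ha
    simp only [Finset.mem_insert, Finset.mem_singleton] at ha
    rcases ha with rfl | rfl | rfl | rfl <;> assumption
  have hcard : ({w, x, y, z} : Finset V).card = 4 := by
    rw [Finset.card_insert_of_notMem (by simp [h1, h2, h3]),
      Finset.card_insert_of_notMem (by simp [h4, h5]),
      Finset.card_insert_of_notMem (by simp [h6]), Finset.card_singleton]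
  have := Finset.card_le_card hsub
  omega

lemma card_four (a b c d : V)
    (h1 : a ≠ b) (h2 : a ≠ c) (h3 : a ≠ d) (h4 : b ≠ c) (h5 : b ≠ d) (h6 : c ≠ d) :
    ({a, b, c, d} : Finset V).card = 4 := by
  classical
  rw [Finset.card_insert_of_notMem (by simp [h1, h2, h3]),
    Finset.card_insert_of_notMem (by simp [h4, h5]),
    Finset.card_insert_of_notMem (by simp [h6]), Finset.card_singleton]

lemma eq_four (N : Finset V) (hN : N.card = 4) (a b c d : V)
    (ha : a ∈ N) (hb : b ∈ N) (hc : c ∈ N) (hd : d ∈ N)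
    (h1 : a ≠ b) (h2 : a ≠ c) (h3 : a ≠ d) (h4 : b ≠ c) (h5 : b ≠ d) (h6 : c ≠ d) :
    N = {a, b, c, d} := by
  classical
  have hsub : ({a, b, c, d} : Finset V) ⊆ N := by
    intro x hx
    simp only [Finset.mem_insert, Finset.mem_singleton] at hx
    rcases hx with rfl | rfl | rfl | rfl <;> assumption
  exact (Finset.eq_of_subset_of_card_le hsub
    (by rw [hN, card_four a b c d h1 h2 h3 h4 h5 h6])).symm

/-- Prove acyclicity of an induced subgraph on a small finset by excluding
triangles and 4-cycles. -/
lemma acyclic_of_no (T : Finset V) (hT : T.card ≤ 4)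
    (hno3 : ∀ x ∈ T, ∀ y ∈ T, ∀ z ∈ T, G.Adj x y → G.Adj y z → G.Adj z x → False)
    (hno4 : ∀ w ∈ T, ∀ x ∈ T, ∀ y ∈ T, ∀ z ∈ T,
      G.Adj w x → G.Adj x y → G.Adj y z → G.Adj z w → w ≠ y → x ≠ z → False) :
    (G.induce (T : Set V)).IsAcyclic := by
  classical
  by_contra h
  have hcard : Fintype.card ((T : Set V) : Type _) ≤ 4 := by
    simpa using hT
  rcases cycle_structure _ hcard h with ⟨x, y, z, h1, h2, h3⟩ |
    ⟨w, x, y, z, h1, h2, h3, h4, hne1, hne2⟩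
  · exact hno3 x.1 (by simpa using x.2) y.1 (by simpa using y.2) z.1 (by simpa using z.2)
      (by simpa using h1) (by simpa using h2) (by simpa using h3)
  · exact hno4 w.1 (by simpa using w.2) x.1 (by simpa using x.2) y.1 (by simpa using y.2)
      z.1 (by simpa using z.2) (by simpa using h1) (by simpa using h2) (by simpa using h3)
      (by simpa using h4) (fun hh => hne1 (Subtype.ext hh)) (fun hh => hne2 (Subtype.ext hh))

end ForestyAux

namespace ForestyAux

variable {V : Type*} [Fintype V] [DecidableEq V] {G : SimpleGraph V}
variable [DecidableRel G.Adj]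

lemma nbhd_eq (hnb : ∀ v : V, (G.neighborFinset v).card = 4)
    (S0 : Finset V) (A B : Set V)
    (hAS : ∀ a ∈ A, a ∉ S0) (hBS : ∀ b ∈ B, b ∉ S0) (hABd : ∀ a ∈ A, a ∉ B)
    (s p q α β : V) (hp : G.Adj s p) (hq : G.Adj s q) (hα : G.Adj s α) (hβ : G.Adj s β)
    (hpS : p ∈ S0) (hqS : q ∈ S0) (hαA : α ∈ A) (hβB : β ∈ B) (hpq : p ≠ q) :
    G.neighborFinset s = {p, q, α, β} :=
  eq_four _ (hnb s) _ _ _ _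
    ((G.mem_neighborFinset s p).mpr hp) ((G.mem_neighborFinset s q).mpr hq)
    ((G.mem_neighborFinset s α).mpr hα) ((G.mem_neighborFinset s β).mpr hβ)
    hpq (fun h => hAS α hαA (h ▸ hpS)) (fun h => hBS β hβB (h ▸ hpS))
    (fun h => hAS α hαA (h ▸ hqS)) (fun h => hBS β hβB (h ▸ hqS))
    (fun h => hABd α hαA (h ▸ hβB))

lemma mem_of_nb {s u p q α β : V} (hN : G.neighborFinset s = ({p, q, α, β} : Finset V))
    (h : G.Adj s u) : u = p ∨ u = q ∨ u = α ∨ u = β := by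
  have := (G.mem_neighborFinset s u).mpr h
  rw [hN] at this
  simpa using this

/-- The case `κ = 3`, the cut being a triangle. -/
lemma caseTriangle3
    (h7 : 7 ≤ Fintype.card V)
    (hnb : ∀ v : V, (G.neighborFinset v).card = 4)
    (S0 : Finset V)
    (hmin : ∀ T : Finset V, IsVertexCut G T → S0.card ≤ T.card)
    (A B : Set V)
    (hcov : ∀ v, v ∉ S0 → v ∈ A ∨ v ∈ B)
    (hAS : ∀ a ∈ A, a ∉ S0) (hBS : ∀ b ∈ B, b ∉ S0)
    (hABd : ∀ a ∈ A, a ∉ B)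
    (hnoe : ∀ a ∈ A, ∀ b ∈ B, ¬ G.Adj a b)
    (hsideA : ∀ s ∈ S0, ∃ a ∈ A, G.Adj s a)
    (hsideB : ∀ s ∈ S0, ∃ b ∈ B, G.Adj s b)
    (x y z : V) (hxy : G.Adj x y) (hyz : G.Adj y z) (hzx : G.Adj z x)
    (hS0 : S0 = {x, y, z}) :
    ∃ T : Finset V, IsVertexCut G T ∧ T.card = S0.card ∧
      (G.induce (T : Set V)).IsAcyclic := by
  have hxS : x ∈ S0 := by simp [hS0]
  have hyS : y ∈ S0 := by simp [hS0]
  have hzS : z ∈ S0 := by simp [hS0]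
  have hxny : x ≠ y := hxy.ne
  have hynz : y ≠ z := hyz.ne
  have hznx : z ≠ x := hzx.ne
  have hcard3 : S0.card = 3 := by
    rw [hS0, Finset.card_insert_of_notMem (by simp [hxny, hznx.symm]),
      Finset.card_insert_of_notMem (by simp [hynz]), Finset.card_singleton]
  -- neighbours of x
  obtain ⟨α, hαA, hxα⟩ := hsideA x hxS
  obtain ⟨βx, hβxB, hxβ⟩ := hsideB x hxS
  have Nx : G.neighborFinset x = {y, z, α, βx} :=
    nbhd_eq hnb S0 A B hAS hBS hABd x y z α βx hxy hzx.symm hxα hxβ hyS hzS hαA hβxB hynz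
  have hαS : α ∉ S0 := hAS α hαA
  -- a neighbour of α inside A, distinct from α
  have hδ : ∃ δ, δ ∈ G.neighborFinset α ∧ δ ∉ S0 := by
    by_contra hcon
    push_neg at hcon
    have hsub : G.neighborFinset α ⊆ S0 := fun d hd => hcon d hd
    have := Finset.card_le_card hsub
    rw [hnb α, hcard3] at this
    omega
  obtain ⟨δ, hδnb, hδS⟩ := hδ
  have hαδ : G.Adj α δ := (G.mem_neighborFinset α δ).mp hδnb
  have hδA : δ ∈ A := by
    rcases hcov δ hδS with h | h
    · exact h
    · exact absurd hαδ (hnoe α hαA δ h)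
  have hδα : δ ≠ α := hαδ.ne'
  -- the common-neighbour configuration is impossible
  have hnc : ¬ (G.Adj y α ∧ G.Adj z α) := by
    rintro ⟨hyα, hzα⟩
    obtain ⟨βy, hβyB, hyβ⟩ := hsideB y hyS
    obtain ⟨βz, hβzB, hzβ⟩ := hsideB z hzS
    have Ny : G.neighborFinset y = {x, z, α, βy} :=
      nbhd_eq hnb S0 A B hAS hBS hABd y x z α βy hxy.symm hyz hyα hyβ hxS hzS hαA hβyB hznx.symm
    have Nz : G.neighborFinset z = {x, y, α, βz} :=
      nbhd_eq hnb S0 A B hAS hBS hABd z x y α βz hzx hyz.symm hzα hzβ hxS hyS hαA hβzB hxny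
    have hcut : IsVertexCut G {α} := by
      refine mk_cut {α} (A \ {α}) ?_ δ ⟨hδA, hδα⟩ (by simpa using hδα)
        x (fun h => hAS x h.1 hxS) (by simpa using fun h : x = α => hαS (h ▸ hxS))
      rintro a ⟨haA, haα⟩ b hab hbT
      simp only [Finset.mem_singleton] at hbT
      by_cases hbS : b ∈ S0
      · exfalso
        rw [hS0] at hbS
        simp only [Finset.mem_insert, Finset.mem_singleton] at hbS
        have haS0 : a ∉ S0 := hAS a haA
        rcases hbS with rfl | rfl | rfl
        · rcases mem_of_nb Nx hab.symm with rfl | rfl | rfl | rfl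
          · exact haS0 hyS
          · exact haS0 hzS
          · exact haα rfl
          · exact hABd a haA hβxB
        · rcases mem_of_nb Ny hab.symm with rfl | rfl | rfl | rfl
          · exact haS0 hxS
          · exact haS0 hzS
          · exact haα rfl
          · exact hABd a haA hβyB
        · rcases mem_of_nb Nz hab.symm with rfl | rfl | rfl | rfl
          · exact haS0 hxS
          · exact haS0 hyS
          · exact haα rfl
          · exact hABd a haA hβzB
      · rcases hcov b hbS with h | h
        · exact ⟨h, hbT⟩
        · exact absurd hab (hnoe a haA b h)
    have := hmin _ hcut
    rw [hcard3] at this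
    simp at this
  -- the cut {y, z, α}
  refine ⟨{y, z, α}, ?_, ?_, ?_⟩
  · refine mk_cut _ (A \ {α}) ?_ δ ⟨hδA, hδα⟩
      (by simp only [Finset.mem_insert, Finset.mem_singleton, not_or]
          exact ⟨fun h => hδS (h ▸ hyS), fun h => hδS (h ▸ hzS), hδα⟩)
      x (fun h => hAS x h.1 hxS)
      (by simp only [Finset.mem_insert, Finset.mem_singleton, not_or]
          exact ⟨hxny, hznx.symm, fun h => hαS (h ▸ hxS)⟩)
    rintro a ⟨haA, haα⟩ b hab hbT
    simp only [Finset.mem_insert, Finset.mem_singleton, not_or] at hbT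
    by_cases hbS : b ∈ S0
    · exfalso
      rw [hS0] at hbS
      simp only [Finset.mem_insert, Finset.mem_singleton] at hbS
      rcases hbS with rfl | rfl | rfl
      · have haS0 : a ∉ S0 := hAS a haA
        rcases mem_of_nb Nx hab.symm with rfl | rfl | rfl | rfl
        · exact haS0 hyS
        · exact haS0 hzS
        · exact haα rfl
        · exact hABd a haA hβxB
      · exact hbT.1 rfl
      · exact hbT.2.1 rfl
    · rcases hcov b hbS with h | h
      · exact ⟨h, hbT.2.2⟩
      · exact absurd hab (hnoe a haA b h)
  · rw [hcard3, Finset.card_insert_of_notMem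
        (by simp only [Finset.mem_insert, Finset.mem_singleton, not_or]
            exact ⟨hynz, fun h => hαS (h ▸ hyS)⟩),
      Finset.card_insert_of_notMem (by simpa using fun h : z = α => hαS (h ▸ hzS)),
      Finset.card_singleton]
  · -- acyclic
    have hTcard : ({y, z, α} : Finset V).card ≤ 4 := by
      apply le_trans (Finset.card_insert_le _ _)
      apply Nat.succ_le_succ
      apply le_trans (Finset.card_insert_le _ _)
      simp
    refine acyclic_of_no _ hTcard ?_ ?_
    · intro a ha b hb c hc hab hbc hca
      simp only [Finset.mem_insert, Finset.mem_singleton] at ha hb hc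
      rcases ha with rfl | rfl | rfl <;> rcases hb with rfl | rfl | rfl <;>
        rcases hc with rfl | rfl | rfl <;>
        first
          | exact G.loopless.irrefl _ hab
          | exact G.loopless.irrefl _ hbc
          | exact G.loopless.irrefl _ hca
          | exact hnc ⟨by first | assumption | exact hab.symm | exact hbc.symm | exact hca.symm,
              by first | assumption | exact hab.symm | exact hbc.symm | exact hca.symm⟩
    · intro w hw a ha b hb c hc h1 h2 h3 h4 hne1 hne2
      have hT3 : ({y, z, α} : Finset V).card = 3 := by
        rw [Finset.card_insert_of_notMem
            (by simp only [Finset.mem_insert, Finset.mem_singleton, not_or]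
                exact ⟨hynz, fun h => hαS (h ▸ hyS)⟩),
          Finset.card_insert_of_notMem (by simpa using fun h : z = α => hαS (h ▸ hzS)),
          Finset.card_singleton]
      exact four_in_three _ hT3 w a b c hw ha hb hc h1.ne hne1 h4.ne' h2.ne hne2 h3.ne

end ForestyAux

namespace ForestyAux

variable {V : Type*} [Fintype V] [DecidableEq V] {G : SimpleGraph V}
variable [DecidableRel G.Adj]

/-- If all edges from the cut into side `A` hit a single vertex `c`, we get a
single-vertex cut, contradicting minimality. -/
lemma no_single (S0 : Finset V)
    (hmin : ∀ T : Finset V, IsVertexCut G T → S0.card ≤ T.card)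
    (A B : Set V)
    (hcov : ∀ v, v ∉ S0 → v ∈ A ∨ v ∈ B)
    (hAS : ∀ a ∈ A, a ∉ S0)
    (hnoe : ∀ a ∈ A, ∀ b ∈ B, ¬ G.Adj a b)
    (c p w : V) (hcA : c ∈ A) (hpA : p ∈ A) (hpc : p ≠ c) (hwS : w ∈ S0)
    (hS2 : 2 ≤ S0.card)
    (hclose : ∀ s ∈ S0, ∀ x ∈ A, G.Adj s x → x = c) : False := by
  have hcut : IsVertexCut G {c} := by
    refine mk_cut {c} (A \ {c}) ?_ p ⟨hpA, hpc⟩ (by simpa using hpc)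
      w (fun h => hAS w h.1 hwS) (by simpa using fun h : w = c => hAS c hcA (h ▸ hwS))
    rintro a ⟨haA, hac⟩ b hab hbT
    simp only [Finset.mem_singleton] at hbT
    by_cases hbS : b ∈ S0
    · exact absurd (hclose b hbS a haA hab.symm) hac
    · rcases hcov b hbS with h | h
      · exact ⟨h, hbT⟩
      · exact absurd hab (hnoe a haA b h)
  have := hmin _ hcut
  simp at this
  omega

/-- The case `κ = 4`, the cut inducing a 4-cycle. -/
lemma caseC4
    (h7 : 7 ≤ Fintype.card V)
    (hnb : ∀ v : V, (G.neighborFinset v).card = 4)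
    (S0 : Finset V)
    (hmin : ∀ T : Finset V, IsVertexCut G T → S0.card ≤ T.card)
    (A B : Set V)
    (hcov : ∀ v, v ∉ S0 → v ∈ A ∨ v ∈ B)
    (hAS : ∀ a ∈ A, a ∉ S0) (hBS : ∀ b ∈ B, b ∉ S0)
    (hABd : ∀ a ∈ A, a ∉ B)
    (hnoe : ∀ a ∈ A, ∀ b ∈ B, ¬ G.Adj a b)
    (hsideA : ∀ s ∈ S0, ∃ a ∈ A, G.Adj s a)
    (hsideB : ∀ s ∈ S0, ∃ b ∈ B, G.Adj s b)
    (s1 s2 s3 s4 : V) (h12 : G.Adj s1 s2) (h23 : G.Adj s2 s3) (h34 : G.Adj s3 s4)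
    (h41 : G.Adj s4 s1) (hd13 : s1 ≠ s3) (hd24 : s2 ≠ s4)
    (hS0 : S0 = {s1, s2, s3, s4}) :
    ∃ T : Finset V, IsVertexCut G T ∧ T.card = S0.card ∧
      (G.induce (T : Set V)).IsAcyclic := by
  have h1S : s1 ∈ S0 := by simp [hS0]
  have h2S : s2 ∈ S0 := by simp [hS0]
  have h3S : s3 ∈ S0 := by simp [hS0]
  have h4S : s4 ∈ S0 := by simp [hS0]
  have hd12 : s1 ≠ s2 := h12.ne
  have hd23 : s2 ≠ s3 := h23.ne
  have hd34 : s3 ≠ s4 := h34.ne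
  have hd14 : s1 ≠ s4 := h41.ne'
  have hcard4 : S0.card = 4 := by
    rw [hS0]; exact card_four _ _ _ _ hd12 hd13 hd14 hd23 hd24 hd34
  have hS2card : 2 ≤ S0.card := by omega
  obtain ⟨a1, ha1A, h1a⟩ := hsideA s1 h1S
  obtain ⟨b1, hb1B, h1b⟩ := hsideB s1 h1S
  obtain ⟨a2, ha2A, h2a⟩ := hsideA s2 h2S
  obtain ⟨b2, hb2B, h2b⟩ := hsideB s2 h2S
  obtain ⟨a3, ha3A, h3a⟩ := hsideA s3 h3S
  obtain ⟨b3, hb3B, h3b⟩ := hsideB s3 h3S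
  obtain ⟨a4, ha4A, h4a⟩ := hsideA s4 h4S
  obtain ⟨b4, hb4B, h4b⟩ := hsideB s4 h4S
  have N1 : G.neighborFinset s1 = {s2, s4, a1, b1} :=
    nbhd_eq hnb S0 A B hAS hBS hABd s1 s2 s4 a1 b1 h12 h41.symm h1a h1b h2S h4S ha1A hb1B hd24
  have N2 : G.neighborFinset s2 = {s1, s3, a2, b2} :=
    nbhd_eq hnb S0 A B hAS hBS hABd s2 s1 s3 a2 b2 h12.symm h23 h2a h2b h1S h3S ha2A hb2B hd13
  have N3 : G.neighborFinset s3 = {s2, s4, a3, b3} :=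
    nbhd_eq hnb S0 A B hAS hBS hABd s3 s2 s4 a3 b3 h23.symm h34 h3a h3b h2S h4S ha3A hb3B hd24
  have N4 : G.neighborFinset s4 = {s1, s3, a4, b4} :=
    nbhd_eq hnb S0 A B hAS hBS hABd s4 s1 s3 a4 b4 h41 h34.symm h4a h4b h1S h3S ha4A hb4B hd13
  -- no chords
  have hn24 : ¬ G.Adj s2 s4 := by
    intro h
    rcases mem_of_nb N2 h with h' | h' | h' | h'
    · exact hd14 h'.symm
    · exact hd34 h'.symm
    · have h4S' := h4S; rw [h'] at h4S'; exact hAS a2 ha2A h4S'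
    · have h4S' := h4S; rw [h'] at h4S'; exact hBS b2 hb2B h4S'
  have hn13 : ¬ G.Adj s1 s3 := by
    intro h
    rcases mem_of_nb N1 h with h' | h' | h' | h'
    · exact hd23 h'.symm
    · exact hd34 h'
    · have h3S' := h3S; rw [h'] at h3S'; exact hAS a1 ha1A h3S'
    · have h3S' := h3S; rw [h'] at h3S'; exact hBS b1 hb1B h3S'
  have hnab1 : ¬ G.Adj a1 b1 := hnoe a1 ha1A b1 hb1B
  -- the isolating cuts around s1 / s2 are minimum vertex cuts
  have hiso : ∀ s : V, IsVertexCut G (G.neighborFinset s) := by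
    intro s
    exact iso_cut h7 _ s (fun y h => (G.mem_neighborFinset s y).mpr h)
      (by simp) (by rw [hnb]; omega)
  by_cases hF1 : G.Adj a1 s2 ∧ G.Adj a1 s4 ∧ G.Adj b1 s2 ∧ G.Adj b1 s4
  · -- a1 = a2 = a4, b1 = b2 = b4; try the cut around s2
    obtain ⟨hA2, hA4, hB2, hB4⟩ := hF1
    have ea2 : a2 = a1 := by
      rcases mem_of_nb N2 hA2.symm with h' | h' | h' | h'
      · rw [h'] at ha1A; exact absurd h1S (hAS s1 ha1A)
      · rw [h'] at ha1A; exact absurd h3S (hAS s3 ha1A)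
      · exact h'.symm
      · rw [h'] at ha1A; exact absurd hb2B (hABd b2 ha1A)
    have eb2 : b2 = b1 := by
      rcases mem_of_nb N2 hB2.symm with h' | h' | h' | h'
      · rw [h'] at hb1B; exact absurd h1S (hBS s1 hb1B)
      · rw [h'] at hb1B; exact absurd h3S (hBS s3 hb1B)
      · rw [h'] at hb1B; exact absurd hb1B (hABd a2 ha2A)
      · exact h'.symm
    rw [ea2, eb2] at N2
    by_cases hF2 : G.Adj a1 s1 ∧ G.Adj a1 s3 ∧ G.Adj b1 s1 ∧ G.Adj b1 s3
    · -- a1 and b1 are adjacent to all of S0: the graph has only 6 vertices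
      exfalso
      obtain ⟨-, hA3, -, hB3⟩ := hF2
      have ea4 : a4 = a1 := by
        have ha1A' := ha1A
        rcases mem_of_nb N4 hA4.symm with h' | h' | h' | h'
        · rw [h'] at ha1A'; exact absurd h1S (hAS s1 ha1A')
        · rw [h'] at ha1A'; exact absurd h3S (hAS s3 ha1A')
        · exact h'.symm
        · rw [h'] at ha1A'; exact absurd hb4B (hABd b4 ha1A')
      have eb4 : b4 = b1 := by
        have hb1B' := hb1B
        rcases mem_of_nb N4 hB4.symm with h' | h' | h' | h'
        · rw [h'] at hb1B'; exact absurd h1S (hBS s1 hb1B')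
        · rw [h'] at hb1B'; exact absurd h3S (hBS s3 hb1B')
        · rw [h'] at hb1B'; exact absurd hb1B' (hABd a4 ha4A)
        · exact h'.symm
      have ea3 : a3 = a1 := by
        have ha1A' := ha1A
        rcases mem_of_nb N3 hA3.symm with h' | h' | h' | h'
        · rw [h'] at ha1A'; exact absurd h2S (hAS s2 ha1A')
        · rw [h'] at ha1A'; exact absurd h4S (hAS s4 ha1A')
        · exact h'.symm
        · rw [h'] at ha1A'; exact absurd hb3B (hABd b3 ha1A')
      have eb3 : b3 = b1 := by
        have hb1B' := hb1B
        rcases mem_of_nb N3 hB3.symm with h' | h' | h' | h'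
        · rw [h'] at hb1B'; exact absurd h2S (hBS s2 hb1B')
        · rw [h'] at hb1B'; exact absurd h4S (hBS s4 hb1B')
        · rw [h'] at hb1B'; exact absurd hb1B' (hABd a3 ha3A)
        · exact h'.symm
      rw [ea3, eb3] at N3
      rw [ea4, eb4] at N4
      -- every vertex of A equals a1, every vertex of B equals b1
      have hclA : ∀ s ∈ S0, ∀ x ∈ A, G.Adj s x → x = a1 := by
        intro s hs x hxA hsx
        rw [hS0] at hs
        simp only [Finset.mem_insert, Finset.mem_singleton] at hs
        have hxS : x ∉ S0 := hAS x hxA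
        rcases hs with rfl | rfl | rfl | rfl
        · rcases mem_of_nb N1 hsx with h' | h' | h' | h'
          · exact absurd (h' ▸ hxS) (fun hh => hh h2S)
          · exact absurd (h' ▸ hxS) (fun hh => hh h4S)
          · exact h'
          · rw [h'] at hxA; exact absurd hb1B (hABd b1 hxA)
        · rcases mem_of_nb N2 hsx with h' | h' | h' | h'
          · exact absurd (h' ▸ hxS) (fun hh => hh h1S)
          · exact absurd (h' ▸ hxS) (fun hh => hh h3S)
          · exact h'
          · rw [h'] at hxA; exact absurd hb1B (hABd b1 hxA)
        · rcases mem_of_nb N3 hsx with h' | h' | h' | h'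
          · exact absurd (h' ▸ hxS) (fun hh => hh h2S)
          · exact absurd (h' ▸ hxS) (fun hh => hh h4S)
          · exact h'
          · rw [h'] at hxA; exact absurd hb1B (hABd b1 hxA)
        · rcases mem_of_nb N4 hsx with h' | h' | h' | h'
          · exact absurd (h' ▸ hxS) (fun hh => hh h1S)
          · exact absurd (h' ▸ hxS) (fun hh => hh h3S)
          · exact h'
          · rw [h'] at hxA; exact absurd hb1B (hABd b1 hxA)
      have hclB : ∀ s ∈ S0, ∀ x ∈ B, G.Adj s x → x = b1 := by
        intro s hs x hxB hsx
        rw [hS0] at hs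
        simp only [Finset.mem_insert, Finset.mem_singleton] at hs
        have hxS : x ∉ S0 := hBS x hxB
        rcases hs with rfl | rfl | rfl | rfl
        · rcases mem_of_nb N1 hsx with h' | h' | h' | h'
          · exact absurd (h' ▸ hxS) (fun hh => hh h2S)
          · exact absurd (h' ▸ hxS) (fun hh => hh h4S)
          · rw [h'] at hxB; exact absurd hxB (hABd a1 ha1A)
          · exact h'
        · rcases mem_of_nb N2 hsx with h' | h' | h' | h'
          · exact absurd (h' ▸ hxS) (fun hh => hh h1S)
          · exact absurd (h' ▸ hxS) (fun hh => hh h3S)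
          · rw [h'] at hxB; exact absurd hxB (hABd a1 ha1A)
          · exact h'
        · rcases mem_of_nb N3 hsx with h' | h' | h' | h'
          · exact absurd (h' ▸ hxS) (fun hh => hh h2S)
          · exact absurd (h' ▸ hxS) (fun hh => hh h4S)
          · rw [h'] at hxB; exact absurd hxB (hABd a1 ha1A)
          · exact h'
        · rcases mem_of_nb N4 hsx with h' | h' | h' | h'
          · exact absurd (h' ▸ hxS) (fun hh => hh h1S)
          · exact absurd (h' ▸ hxS) (fun hh => hh h3S)
          · rw [h'] at hxB; exact absurd hxB (hABd a1 ha1A)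
          · exact h'
      have hAone : ∀ a' ∈ A, a' = a1 := by
        intro a' ha'
        by_contra hne
        exact no_single S0 hmin A B hcov hAS hnoe a1 a' s1 ha1A ha' hne h1S hS2card hclA
      have hBone : ∀ b' ∈ B, b' = b1 := by
        intro b' hb'
        by_contra hne
        exact no_single S0 hmin B A (fun v hv => (hcov v hv).symm) hBS
          (fun b hb a ha hadj => hnoe a ha b hb hadj.symm)
          b1 b' s1 hb1B hb' hne h1S hS2card hclB
      have hsub : (Finset.univ : Finset V) ⊆ {s1, s2, s3, s4, a1, b1} := by
        intro v _
        by_cases hv : v ∈ S0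
        · rw [hS0] at hv
          simp only [Finset.mem_insert, Finset.mem_singleton] at hv ⊢
          tauto
        · rcases hcov v hv with h | h
          · simp [hAone v h]
          · simp [hBone v h]
      have hle := Finset.card_le_card hsub
      rw [Finset.card_univ] at hle
      have : ({s1, s2, s3, s4, a1, b1} : Finset V).card ≤ 6 := by
        apply le_trans (Finset.card_insert_le _ _)
        apply Nat.succ_le_succ
        apply le_trans (Finset.card_insert_le _ _)
        apply Nat.succ_le_succ
        apply le_trans (Finset.card_insert_le _ _)
        apply Nat.succ_le_succ
        apply le_trans (Finset.card_insert_le _ _)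
        apply Nat.succ_le_succ
        apply le_trans (Finset.card_insert_le _ _)
        simp
      omega
    · -- the cut around s2 works
      refine ⟨G.neighborFinset s2, hiso s2, by rw [hnb, hcard4], ?_⟩
      rw [N2]
      have hnab' : ¬ G.Adj a1 b1 := hnab1
      refine acyclic_of_no _ (by rw [← N2, hnb]) ?_ ?_
      · intro a ha b hb c hc hab hbc hca
        simp only [Finset.mem_insert, Finset.mem_singleton] at ha hb hc
        rcases ha with rfl | rfl | rfl | rfl <;> rcases hb with rfl | rfl | rfl | rfl <;>
          rcases hc with rfl | rfl | rfl | rfl <;>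
          first
            | exact G.loopless.irrefl _ hab
            | exact G.loopless.irrefl _ hbc
            | exact G.loopless.irrefl _ hca
            | exact hn13 (by first | assumption | exact hab.symm | exact hbc.symm | exact hca.symm)
            | exact hnab' (by first | assumption | exact hab.symm | exact hbc.symm | exact hca.symm)
            | exact hF2 ⟨by first | assumption | exact hab.symm | exact hbc.symm | exact hca.symm,
                by first | assumption | exact hab.symm | exact hbc.symm | exact hca.symm,
                by first | assumption | exact hab.symm | exact hbc.symm | exact hca.symm,
                by first | assumption | exact hab.symm | exact hbc.symm | exact hca.symm⟩
      · intro w hw a ha b hb c hc h1 h2 h3 h4 hne1 hne2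
        simp only [Finset.mem_insert, Finset.mem_singleton] at hw ha hb hc
        rcases hw with rfl | rfl | rfl | rfl <;> rcases ha with rfl | rfl | rfl | rfl <;>
          rcases hb with rfl | rfl | rfl | rfl <;> rcases hc with rfl | rfl | rfl | rfl <;>
          first
            | exact hne1 rfl
            | exact hne2 rfl
            | exact G.loopless.irrefl _ h1
            | exact G.loopless.irrefl _ h2
            | exact G.loopless.irrefl _ h3
            | exact G.loopless.irrefl _ h4
            | exact hn13 (by first | assumption | exact h1.symm | exact h2.symm | exact h3.symm | exact h4.symm)
            | exact hnab' (by first | assumption | exact h1.symm | exact h2.symm | exact h3.symm | exact h4.symm)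
            | exact hF2 ⟨by first | assumption | exact h1.symm | exact h2.symm | exact h3.symm | exact h4.symm,
                by first | assumption | exact h1.symm | exact h2.symm | exact h3.symm | exact h4.symm,
                by first | assumption | exact h1.symm | exact h2.symm | exact h3.symm | exact h4.symm,
                by first | assumption | exact h1.symm | exact h2.symm | exact h3.symm | exact h4.symm⟩
  · -- the cut around s1 works
    refine ⟨G.neighborFinset s1, hiso s1, by rw [hnb, hcard4], ?_⟩
    rw [N1]
    refine acyclic_of_no _ (by rw [← N1, hnb]) ?_ ?_
    · intro a ha b hb c hc hab hbc hca
      simp only [Finset.mem_insert, Finset.mem_singleton] at ha hb hc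
      rcases ha with rfl | rfl | rfl | rfl <;> rcases hb with rfl | rfl | rfl | rfl <;>
        rcases hc with rfl | rfl | rfl | rfl <;>
        first
          | exact G.loopless.irrefl _ hab
          | exact G.loopless.irrefl _ hbc
          | exact G.loopless.irrefl _ hca
          | exact hn24 (by first | assumption | exact hab.symm | exact hbc.symm | exact hca.symm)
          | exact hnab1 (by first | assumption | exact hab.symm | exact hbc.symm | exact hca.symm)
          | exact hF1 ⟨by first | assumption | exact hab.symm | exact hbc.symm | exact hca.symm,
              by first | assumption | exact hab.symm | exact hbc.symm | exact hca.symm,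
              by first | assumption | exact hab.symm | exact hbc.symm | exact hca.symm,
              by first | assumption | exact hab.symm | exact hbc.symm | exact hca.symm⟩
    · intro w hw a ha b hb c hc h1 h2 h3 h4 hne1 hne2
      simp only [Finset.mem_insert, Finset.mem_singleton] at hw ha hb hc
      rcases hw with rfl | rfl | rfl | rfl <;> rcases ha with rfl | rfl | rfl | rfl <;>
        rcases hb with rfl | rfl | rfl | rfl <;> rcases hc with rfl | rfl | rfl | rfl <;>
        first
          | exact hne1 rfl
          | exact hne2 rfl
          | exact G.loopless.irrefl _ h1
          | exact G.loopless.irrefl _ h2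
          | exact G.loopless.irrefl _ h3
          | exact G.loopless.irrefl _ h4
          | exact hn24 (by first | assumption | exact h1.symm | exact h2.symm | exact h3.symm | exact h4.symm)
          | exact hnab1 (by first | assumption | exact h1.symm | exact h2.symm | exact h3.symm | exact h4.symm)
          | exact hF1 ⟨by first | assumption | exact h1.symm | exact h2.symm | exact h3.symm | exact h4.symm,
              by first | assumption | exact h1.symm | exact h2.symm | exact h3.symm | exact h4.symm,
              by first | assumption | exact h1.symm | exact h2.symm | exact h3.symm | exact h4.symm,
              by first | assumption | exact h1.symm | exact h2.symm | exact h3.symm | exact h4.symm⟩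

end ForestyAux

namespace ForestyAux

variable {V : Type*} [Fintype V] [DecidableEq V] {G : SimpleGraph V}
variable [DecidableRel G.Adj]

/-- A vertex with three specified distinct neighbours has exactly one more. -/
lemma fourth_nbr (hnb : ∀ v : V, (G.neighborFinset v).card = 4)
    (s t q r : V) (hst : G.Adj s t) (hsq : G.Adj s q) (hsr : G.Adj s r)
    (htq : t ≠ q) (htr : t ≠ r) (hqr : q ≠ r) :
    ∃ w, G.Adj s w ∧ w ≠ t ∧ w ≠ q ∧ w ≠ r ∧ G.neighborFinset s = {t, q, r, w} := by
  have hex : ∃ w ∈ G.neighborFinset s, w ∉ ({t, q, r} : Finset V) := by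
    by_contra hcon
    push_neg at hcon
    have hsub : G.neighborFinset s ⊆ {t, q, r} := fun d hd => hcon d hd
    have hle := Finset.card_le_card hsub
    have h3 : ({t, q, r} : Finset V).card ≤ 3 := by
      apply le_trans (Finset.card_insert_le _ _)
      apply Nat.succ_le_succ
      apply le_trans (Finset.card_insert_le _ _)
      simp
    rw [hnb] at hle
    omega
  obtain ⟨w, hwnb, hwmem⟩ := hex
  simp only [Finset.mem_insert, Finset.mem_singleton, not_or] at hwmem
  obtain ⟨hwt, hwq, hwr⟩ := hwmem
  refine ⟨w, (G.mem_neighborFinset _ _).mp hwnb, hwt, hwq, hwr, ?_⟩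
  exact eq_four _ (hnb s) t q r w ((G.mem_neighborFinset _ _).mpr hst)
    ((G.mem_neighborFinset _ _).mpr hsq) ((G.mem_neighborFinset _ _).mpr hsr)
    hwnb htq htr (Ne.symm hwt) hqr (Ne.symm hwq) (Ne.symm hwr)

/-- The K4 subcase: `t` is in the cut, its neighbours `p`, `q`, `r` form a
triangle in side `C`, and `z` is a neighbour of `t` in the other side `D`. -/
lemma caseK4
    (h7 : 7 ≤ Fintype.card V)
    (hnb : ∀ v : V, (G.neighborFinset v).card = 4)
    (S0 : Finset V)
    (hmin : ∀ T : Finset V, IsVertexCut G T → S0.card ≤ T.card)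
    (hcard4 : S0.card = 4)
    (C D : Set V)
    (hCS : ∀ a ∈ C, a ∉ S0) (hDS : ∀ b ∈ D, b ∉ S0)
    (hCD : ∀ a ∈ C, a ∉ D)
    (hnoeCD : ∀ a ∈ C, ∀ b ∈ D, ¬ G.Adj a b)
    (t p q r z : V) (htS : t ∈ S0)
    (htp : G.Adj t p) (htq : G.Adj t q) (htr : G.Adj t r) (htz : G.Adj t z)
    (hpq : G.Adj p q) (hqr : G.Adj q r) (hrp : G.Adj r p)
    (hpC : p ∈ C) (hqC : q ∈ C) (hrC : r ∈ C) (hzD : z ∈ D) :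
    ∃ T : Finset V, IsVertexCut G T ∧ T.card = S0.card ∧
      (G.induce (T : Set V)).IsAcyclic := by
  have hpS : p ∉ S0 := hCS p hpC
  have hqS : q ∉ S0 := hCS q hqC
  have hrS : r ∉ S0 := hCS r hrC
  have hzS : z ∉ S0 := hDS z hzD
  have htp' : t ≠ p := fun h => hpS (h ▸ htS)
  have htq' : t ≠ q := fun h => hqS (h ▸ htS)
  have htr' : t ≠ r := fun h => hrS (h ▸ htS)
  have hzp : z ≠ p := fun h => hCD p hpC (h ▸ hzD)
  have hzq : z ≠ q := fun h => hCD q hqC (h ▸ hzD)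
  have hzr : z ≠ r := fun h => hCD r hrC (h ▸ hzD)
  have Nt : G.neighborFinset t = {z, p, q, r} :=
    eq_four _ (hnb t) z p q r ((G.mem_neighborFinset _ _).mpr htz)
      ((G.mem_neighborFinset _ _).mpr htp) ((G.mem_neighborFinset _ _).mpr htq)
      ((G.mem_neighborFinset _ _).mpr htr) hzp hzq hzr hpq.ne hrp.ne' hqr.ne
  obtain ⟨wp, hpwp, hwpt, hwpq, hwpr, Np⟩ :=
    fourth_nbr hnb p t q r htp.symm hpq hrp.symm htq' htr' hqr.ne
  obtain ⟨wq, hqwq, hwqt, hwqp, hwqr, Nq⟩ :=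
    fourth_nbr hnb q t p r htq.symm hpq.symm hqr htp' htr' hrp.ne'
  obtain ⟨wr, hrwr, hwrt, hwrp, hwrq, Nr⟩ :=
    fourth_nbr hnb r t p q htr.symm hrp hqr.symm htp' htq' hpq.ne
  -- w's lie in C ∪ S0, hence differ from z, and are non-adjacent to t
  have hwside : ∀ s ws : V, s ∈ C → G.Adj s ws → ws ≠ z := by
    intro s ws hsC hadj h
    exact hnoeCD s hsC z hzD (h ▸ hadj)
  have hwpz : wp ≠ z := hwside p wp hpC hpwp
  have hwqz : wq ≠ z := hwside q wq hqC hqwq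
  have hntwp : ¬ G.Adj t wp := by
    intro h
    rcases mem_of_nb Nt h with h' | h' | h' | h'
    · exact hwpz h'
    · exact hpwp.ne' h'
    · exact hwpq h'
    · exact hwpr h'
  have hntwq : ¬ G.Adj t wq := by
    intro h
    rcases mem_of_nb Nt h with h' | h' | h' | h'
    · exact hwqz h'
    · exact hwqp h'
    · exact hqwq.ne' h'
    · exact hwqr h'
  -- the two fourth neighbours are distinct
  have hwpwq : wp ≠ wq := by
    intro h
    subst h
    have hcut : IsVertexCut G {t, r, wp} := by
      obtain ⟨v', hv'⟩ := exists_outside h7 {p, q, t, r, wp}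
        (by
          apply le_trans (Finset.card_insert_le _ _)
          apply Nat.succ_le_succ
          apply le_trans (Finset.card_insert_le _ _)
          apply Nat.succ_le_succ
          apply le_trans (Finset.card_insert_le _ _)
          apply Nat.succ_le_succ
          apply le_trans (Finset.card_insert_le _ _)
          simp)
      simp only [Finset.mem_insert, Finset.mem_singleton, not_or] at hv'
      obtain ⟨hv'p, hv'q, hv't, hv'r, hv'wp⟩ := hv'
      refine mk_cut _ {p, q} ?_ p (by simp) ?_ v' (by simp [hv'p, hv'q]) ?_
      · rintro a ha b hab hbT
        simp only [Finset.mem_insert, Finset.mem_singleton, not_or] at hbT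
        obtain ⟨hbt, hbr, hbwp⟩ := hbT
        simp only [Set.mem_insert_iff, Set.mem_singleton_iff] at ha
        rcases ha with rfl | rfl
        · rcases mem_of_nb Np hab with h' | h' | h' | h'
          · exact absurd h' hbt
          · simp [h']
          · exact absurd h' hbr
          · exact absurd h' hbwp
        · rcases mem_of_nb Nq hab with h' | h' | h' | h'
          · exact absurd h' hbt
          · simp [h']
          · exact absurd h' hbr
          · exact absurd h' hbwp
      · simp only [Finset.mem_insert, Finset.mem_singleton, not_or]
        exact ⟨htp'.symm, hrp.ne', hpwp.ne⟩
      · simp only [Finset.mem_insert, Finset.mem_singleton, not_or]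
        exact ⟨hv't, hv'r, hv'wp⟩
    have hle := hmin _ hcut
    have h3 : ({t, r, wp} : Finset V).card ≤ 3 := by
      apply le_trans (Finset.card_insert_le _ _)
      apply Nat.succ_le_succ
      apply le_trans (Finset.card_insert_le _ _)
      simp
    omega
  -- the final cut {t, r, wp, wq}
  have hrw : ¬ (G.Adj r wp ∧ G.Adj r wq) := by
    rintro ⟨h1, h2⟩
    have e1 : wp = wr := by
      rcases mem_of_nb Nr h1 with h' | h' | h' | h'
      · exact absurd h' hwpt
      · exact absurd h' (hpwp.ne')
      · exact absurd h' hwpq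
      · exact h'
    have e2 : wq = wr := by
      rcases mem_of_nb Nr h2 with h' | h' | h' | h'
      · exact absurd h' hwqt
      · exact absurd h' hwqp
      · exact absurd h' (hqwq.ne')
      · exact h'
    exact hwpwq (e1.trans e2.symm)
  refine ⟨{t, r, wp, wq}, ?_, ?_, ?_⟩
  · obtain ⟨v', hv'⟩ := exists_outside h7 {p, q, t, r, wp, wq}
      (by
        apply le_trans (Finset.card_insert_le _ _)
        apply Nat.succ_le_succ
        apply le_trans (Finset.card_insert_le _ _)
        apply Nat.succ_le_succ
        apply le_trans (Finset.card_insert_le _ _)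
        apply Nat.succ_le_succ
        apply le_trans (Finset.card_insert_le _ _)
        apply Nat.succ_le_succ
        apply le_trans (Finset.card_insert_le _ _)
        simp)
    simp only [Finset.mem_insert, Finset.mem_singleton, not_or] at hv'
    obtain ⟨hv'p, hv'q, hv't, hv'r, hv'wp, hv'wq⟩ := hv'
    refine mk_cut _ {p, q} ?_ p (by simp) ?_ v' (by simp [hv'p, hv'q]) ?_
    · rintro a ha b hab hbT
      simp only [Finset.mem_insert, Finset.mem_singleton, not_or] at hbT
      obtain ⟨hbt, hbr, hbwp, hbwq⟩ := hbT
      simp only [Set.mem_insert_iff, Set.mem_singleton_iff] at ha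
      rcases ha with rfl | rfl
      · rcases mem_of_nb Np hab with h' | h' | h' | h'
        · exact absurd h' hbt
        · simp [h']
        · exact absurd h' hbr
        · exact absurd h' hbwp
      · rcases mem_of_nb Nq hab with h' | h' | h' | h'
        · exact absurd h' hbt
        · simp [h']
        · exact absurd h' hbr
        · exact absurd h' hbwq
    · simp only [Finset.mem_insert, Finset.mem_singleton, not_or]
      exact ⟨htp'.symm, hrp.ne', hpwp.ne, fun h => hwqp h.symm⟩
    · simp only [Finset.mem_insert, Finset.mem_singleton, not_or]
      exact ⟨hv't, hv'r, hv'wp, hv'wq⟩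
  · rw [hcard4]
    exact card_four t r wp wq htr' (Ne.symm hwpt) (Ne.symm hwqt) (Ne.symm hwpr)
      (Ne.symm hwqr) hwpwq
  · refine acyclic_of_no _ (by
      apply le_trans (Finset.card_insert_le _ _)
      apply Nat.succ_le_succ
      apply le_trans (Finset.card_insert_le _ _)
      apply Nat.succ_le_succ
      apply le_trans (Finset.card_insert_le _ _)
      simp) ?_ ?_
    · intro a ha b hb c hc hab hbc hca
      simp only [Finset.mem_insert, Finset.mem_singleton] at ha hb hc
      rcases ha with rfl | rfl | rfl | rfl <;> rcases hb with rfl | rfl | rfl | rfl <;>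
        rcases hc with rfl | rfl | rfl | rfl <;>
        first
          | exact G.loopless.irrefl _ hab
          | exact G.loopless.irrefl _ hbc
          | exact G.loopless.irrefl _ hca
          | exact hntwp (by first | assumption | exact hab.symm | exact hbc.symm | exact hca.symm)
          | exact hntwq (by first | assumption | exact hab.symm | exact hbc.symm | exact hca.symm)
          | exact hrw ⟨by first | assumption | exact hab.symm | exact hbc.symm | exact hca.symm, by first | assumption | exact hab.symm | exact hbc.symm | exact hca.symm⟩
    · intro w hw a ha b hb c hc h1 h2 h3 h4 hne1 hne2
      simp only [Finset.mem_insert, Finset.mem_singleton] at hw ha hb hc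
      rcases hw with rfl | rfl | rfl | rfl <;> rcases ha with rfl | rfl | rfl | rfl <;>
        rcases hb with rfl | rfl | rfl | rfl <;> rcases hc with rfl | rfl | rfl | rfl <;>
        first
          | exact hne1 rfl
          | exact hne2 rfl
          | exact G.loopless.irrefl _ h1
          | exact G.loopless.irrefl _ h2
          | exact G.loopless.irrefl _ h3
          | exact G.loopless.irrefl _ h4
          | exact hntwp (by first | assumption | exact h1.symm | exact h2.symm | exact h3.symm | exact h4.symm)
          | exact hntwq (by first | assumption | exact h1.symm | exact h2.symm | exact h3.symm | exact h4.symm)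
          | exact hrw ⟨by first | assumption | exact h1.symm | exact h2.symm | exact h3.symm | exact h4.symm, by first | assumption | exact h1.symm | exact h2.symm | exact h3.symm | exact h4.symm⟩

end ForestyAux

namespace ForestyAux

variable {V : Type*} [Fintype V] [DecidableEq V] {G : SimpleGraph V}
variable [DecidableRel G.Adj]

/-- The case `κ = 4` with the cut inducing a triangle plus an extra vertex. -/
lemma caseTriangle4
    (h7 : 7 ≤ Fintype.card V)
    (hnb : ∀ v : V, (G.neighborFinset v).card = 4)
    (S0 : Finset V)
    (hmin : ∀ T : Finset V, IsVertexCut G T → S0.card ≤ T.card)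
    (A B : Set V)
    (hcov : ∀ v, v ∉ S0 → v ∈ A ∨ v ∈ B)
    (hAS : ∀ a ∈ A, a ∉ S0) (hBS : ∀ b ∈ B, b ∉ S0)
    (hABd : ∀ a ∈ A, a ∉ B)
    (hnoe : ∀ a ∈ A, ∀ b ∈ B, ¬ G.Adj a b)
    (hsideA : ∀ s ∈ S0, ∃ a ∈ A, G.Adj s a)
    (hsideB : ∀ s ∈ S0, ∃ b ∈ B, G.Adj s b)
    (x y z t : V) (hxy : G.Adj x y) (hyz : G.Adj y z) (hzx : G.Adj z x)
    (htx : t ≠ x) (hty : t ≠ y) (htz : t ≠ z)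
    (hS0 : S0 = {x, y, z, t}) :
    ∃ T : Finset V, IsVertexCut G T ∧ T.card = S0.card ∧
      (G.induce (T : Set V)).IsAcyclic := by
  have hxS : x ∈ S0 := by simp [hS0]
  have hyS : y ∈ S0 := by simp [hS0]
  have hzS : z ∈ S0 := by simp [hS0]
  have htS : t ∈ S0 := by simp [hS0]
  have hcard4 : S0.card = 4 := by
    rw [hS0]
    exact card_four x y z t hxy.ne hzx.ne' (Ne.symm htx) hyz.ne (Ne.symm hty) (Ne.symm htz)
  obtain ⟨αx, hαxA, hxα⟩ := hsideA x hxS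
  obtain ⟨βx, hβxB, hxβ⟩ := hsideB x hxS
  obtain ⟨αy, hαyA, hyα⟩ := hsideA y hyS
  obtain ⟨βy, hβyB, hyβ⟩ := hsideB y hyS
  obtain ⟨αz, hαzA, hzα⟩ := hsideA z hzS
  obtain ⟨βz, hβzB, hzβ⟩ := hsideB z hzS
  obtain ⟨αt, hαtA, htα⟩ := hsideA t htS
  obtain ⟨βt, hβtB, htβ⟩ := hsideB t htS
  have Nx : G.neighborFinset x = {y, z, αx, βx} :=
    nbhd_eq hnb S0 A B hAS hBS hABd x y z αx βx hxy hzx.symm hxα hxβ hyS hzS hαxA hβxB hyz.ne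
  have Ny : G.neighborFinset y = {x, z, αy, βy} :=
    nbhd_eq hnb S0 A B hAS hBS hABd y x z αy βy hxy.symm hyz hyα hyβ hxS hzS hαyA hβyB hzx.ne'
  have Nz : G.neighborFinset z = {x, y, αz, βz} :=
    nbhd_eq hnb S0 A B hAS hBS hABd z x y αz βz hzx hyz.symm hzα hzβ hxS hyS hαzA hβzB hxy.ne
  -- t is not adjacent to x, y, z, so its neighbours are outside `S0`
  have hnxt : ¬ G.Adj x t := by
    intro h
    rcases mem_of_nb Nx h with h' | h' | h' | h'
    · exact hty h'
    · exact htz h'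
    · rw [h'] at htS; exact hAS αx hαxA htS
    · rw [h'] at htS; exact hBS βx hβxB htS
  have hnyt : ¬ G.Adj y t := by
    intro h
    rcases mem_of_nb Ny h with h' | h' | h' | h'
    · exact htx h'
    · exact htz h'
    · rw [h'] at htS; exact hAS αy hαyA htS
    · rw [h'] at htS; exact hBS βy hβyB htS
  have hnzt : ¬ G.Adj z t := by
    intro h
    rcases mem_of_nb Nz h with h' | h' | h' | h'
    · exact htx h'
    · exact hty h'
    · rw [h'] at htS; exact hAS αz hαzA htS
    · rw [h'] at htS; exact hBS βz hβzB htS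
  have hnbrt : ∀ u, G.Adj t u → u ∉ S0 := by
    intro u hu huS
    rw [hS0] at huS
    simp only [Finset.mem_insert, Finset.mem_singleton] at huS
    rcases huS with rfl | rfl | rfl | rfl
    · exact hnxt hu.symm
    · exact hnyt hu.symm
    · exact hnzt hu.symm
    · exact G.loopless.irrefl _ hu
  by_cases htri : ∃ p q r, G.Adj t p ∧ G.Adj t q ∧ G.Adj t r ∧
      G.Adj p q ∧ G.Adj q r ∧ G.Adj r p
  · obtain ⟨p, q, r, htp, htq, htr, hpq, hqr, hrp⟩ := htri
    have hpS : p ∉ S0 := hnbrt p htp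
    have hqS : q ∉ S0 := hnbrt q htq
    have hrS : r ∉ S0 := hnbrt r htr
    rcases hcov p hpS with hpA | hpB
    · have hqA : q ∈ A := by
        rcases hcov q hqS with h | h
        · exact h
        · exact absurd hpq (hnoe p hpA q h)
      have hrA : r ∈ A := by
        rcases hcov r hrS with h | h
        · exact h
        · exact absurd hqr (hnoe q hqA r h)
      exact caseK4 h7 hnb S0 hmin hcard4 A B hAS hBS hABd hnoe t p q r βt htS
        htp htq htr htβ hpq hqr hrp hpA hqA hrA hβtB
    · have hqB : q ∈ B := by
        rcases hcov q hqS with h | h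
        · exact absurd hpq.symm (hnoe q h p hpB)
        · exact h
      have hrB : r ∈ B := by
        rcases hcov r hrS with h | h
        · exact absurd hqr.symm (hnoe r h q hqB)
        · exact h
      exact caseK4 h7 hnb S0 hmin hcard4 B A hBS hAS
        (fun b hb ha => hABd b ha hb)
        (fun b hb a ha h => hnoe a ha b hb h.symm)
        t p q r αt htS htp htq htr htα hpq hqr hrp hpB hqB hrB hαtA
  · -- no triangle among the neighbours of t : the cut around t works
    refine ⟨G.neighborFinset t, ?_, by rw [hnb, hcard4], ?_⟩
    · exact iso_cut h7 _ t (fun u h => (G.mem_neighborFinset _ _).mpr h)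
        (by simp) (by rw [hnb]; omega)
    · refine acyclic_of_no _ (by rw [hnb]) ?_ ?_
      · intro a ha b hb c hc hab hbc hca
        exact htri ⟨a, b, c, (G.mem_neighborFinset _ _).mp ha,
          (G.mem_neighborFinset _ _).mp hb, (G.mem_neighborFinset _ _).mp hc, hab, hbc, hca⟩
      · intro w hw a ha b hb c hc h1 h2 h3 h4 hne1 hne2
        have Neq : G.neighborFinset t = {w, a, b, c} :=
          eq_four _ (hnb t) w a b c hw ha hb hc h1.ne hne1 h4.ne' h2.ne hne2 h3.ne
        have stepA : ∀ u v : V, u ∈ A → G.Adj u v → v ∉ S0 → v ∈ A := by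
          intro u v huA hadj hvS
          rcases hcov v hvS with h | h
          · exact h
          · exact absurd hadj (hnoe u huA v h)
        have stepB : ∀ u v : V, u ∈ B → G.Adj u v → v ∉ S0 → v ∈ B := by
          intro u v huB hadj hvS
          rcases hcov v hvS with h | h
          · exact absurd hadj.symm (hnoe v h u huB)
          · exact h
        have hαmem : αt = w ∨ αt = a ∨ αt = b ∨ αt = c := mem_of_nb Neq htα
        have hβmem : βt = w ∨ βt = a ∨ βt = b ∨ βt = c := mem_of_nb Neq htβ
        have hwS : w ∉ S0 := hnbrt w ((G.mem_neighborFinset _ _).mp hw)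
        have haS : a ∉ S0 := hnbrt a ((G.mem_neighborFinset _ _).mp ha)
        have hbS : b ∉ S0 := hnbrt b ((G.mem_neighborFinset _ _).mp hb)
        have hcS : c ∉ S0 := hnbrt c ((G.mem_neighborFinset _ _).mp hc)
        rcases hcov w hwS with hwA | hwB
        · have haA : a ∈ A := stepA w a hwA h1 haS
          have hbA : b ∈ A := stepA a b haA h2 hbS
          have hcA : c ∈ A := stepA b c hbA h3 hcS
          rcases hβmem with h' | h' | h' | h'
          · rw [h'] at hβtB; exact hABd w hwA hβtB
          · rw [h'] at hβtB; exact hABd a haA hβtB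
          · rw [h'] at hβtB; exact hABd b hbA hβtB
          · rw [h'] at hβtB; exact hABd c hcA hβtB
        · have haB : a ∈ B := stepB w a hwB h1 haS
          have hbB : b ∈ B := stepB a b haB h2 hbS
          have hcB : c ∈ B := stepB b c hbB h3 hcS
          rcases hαmem with h' | h' | h' | h'
          · rw [h'] at hαtA; exact hABd w hαtA hwB
          · rw [h'] at hαtA; exact hABd a hαtA haB
          · rw [h'] at hαtA; exact hABd b hαtA hbB
          · rw [h'] at hαtA; exact hABd c hαtA hcB

end ForestyAux

open ForestyAux in
/-- Every connected 4-regular graph of order at least seven has a foresty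
minimum vertex cut. -/
theorem four_regular_foresty_minimum_vertex_cut
    {V : Type*} [Fintype V] (G : SimpleGraph V)
    (hconn : G.Connected)
    (hreg : ∀ v : V, (G.neighborSet v).ncard = 4)
    (h7 : 7 ≤ Fintype.card V) :
    ∃ S : Finset V, IsVertexCut G S ∧ S.card = graphConnectivity G ∧
      (G.induce (S : Set V)).IsAcyclic := by
  classical
  have hnb : ∀ v : V, (G.neighborFinset v).card = 4 := by
    intro v
    have h := hreg v
    rwa [Set.ncard_eq_toFinset_card', ← SimpleGraph.neighborFinset_def] at h
  have hne : Nonempty V := by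
    have : 0 < Fintype.card V := by omega
    exact Fintype.card_pos_iff.mp this
  obtain ⟨u⟩ := hne
  have hcut0 : IsVertexCut G (G.neighborFinset u) :=
    iso_cut h7 _ u (fun y h => (G.mem_neighborFinset _ _).mpr h) (by simp) (by rw [hnb]; omega)
  have hKne : {k | ∃ S : Finset V, IsVertexCut G S ∧ S.card = k}.Nonempty :=
    ⟨(G.neighborFinset u).card, G.neighborFinset u, hcut0, rfl⟩
  obtain ⟨S0, hS0cut, hS0card⟩ := Nat.sInf_mem hKne
  have hS0κ : S0.card = graphConnectivity G := hS0card
  have hκle : ∀ T : Finset V, IsVertexCut G T → graphConnectivity G ≤ T.card :=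
    fun T hT => Nat.sInf_le ⟨T, hT, rfl⟩
  have hmin : ∀ T : Finset V, IsVertexCut G T → S0.card ≤ T.card :=
    fun T hT => le_trans (le_of_eq hS0κ) (hκle T hT)
  have hk4 : S0.card ≤ 4 := by
    have h := hmin _ hcut0
    rwa [hnb u] at h
  by_cases hac : (G.induce (S0 : Set V)).IsAcyclic
  · exact ⟨S0, hS0cut, hS0κ, hac⟩
  obtain ⟨A, B, hAne, hBne, hcov, hAS, hBS, hABd, hnoe⟩ := sep_of_cut S0 hS0cut
  have hsideA : ∀ s ∈ S0, ∃ a ∈ A, G.Adj s a := fun s hs =>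
    nbr_side S0 hmin A B hAne hcov hAS hBS hnoe s hs
  have hsideB : ∀ s ∈ S0, ∃ b ∈ B, G.Adj s b := fun s hs =>
    nbr_side S0 hmin B A hBne (fun v hv => (hcov v hv).symm) hBS hAS
      (fun b hb a ha h => hnoe a ha b hb h.symm) s hs
  have hcardle : Fintype.card ((S0 : Set V) : Type _) ≤ 4 := by simpa using hk4
  rcases cycle_structure _ hcardle hac with ⟨x, y, z, h1, h2, h3⟩ |
    ⟨w, x, y, z, h1, h2, h3, h4, hne1, hne2⟩
  · -- triangle in the cut
    have hxS : (x : V) ∈ S0 := by have := x.2; simpa using this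
    have hyS : (y : V) ∈ S0 := by have := y.2; simpa using this
    have hzS : (z : V) ∈ S0 := by have := z.2; simpa using this
    have a1 : G.Adj (x : V) (y : V) := by simpa using h1
    have a2 : G.Adj (y : V) (z : V) := by simpa using h2
    have a3 : G.Adj (z : V) (x : V) := by simpa using h3
    have hsub3 : ({(x : V), (y : V), (z : V)} : Finset V) ⊆ S0 := by
      intro a ha
      simp only [Finset.mem_insert, Finset.mem_singleton] at ha
      rcases ha with rfl | rfl | rfl <;> assumption
    have hc3 : ({(x : V), (y : V), (z : V)} : Finset V).card = 3 := by
      rw [Finset.card_insert_of_notMem (by simp [a1.ne, a3.ne']),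
        Finset.card_insert_of_notMem (by simp [a2.ne]), Finset.card_singleton]
    have h3le : 3 ≤ S0.card := hc3 ▸ Finset.card_le_card hsub3
    by_cases hc : S0.card = 3
    · have hS0eq : S0 = {(x : V), (y : V), (z : V)} :=
        (Finset.eq_of_subset_of_card_le hsub3 (by omega)).symm
      obtain ⟨T, hT1, hT2, hT3⟩ := caseTriangle3 h7 hnb S0 hmin A B hcov hAS hBS hABd hnoe
        hsideA hsideB _ _ _ a1 a2 a3 hS0eq
      exact ⟨T, hT1, hT2.trans hS0κ, hT3⟩
    · have hc4 : S0.card = 4 := by omega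
      have hext : ∃ t ∈ S0, t ∉ ({(x : V), (y : V), (z : V)} : Finset V) := by
        by_contra hcon
        push_neg at hcon
        have := Finset.card_le_card (fun a ha => hcon a ha)
        omega
      obtain ⟨t, htS, htmem⟩ := hext
      simp only [Finset.mem_insert, Finset.mem_singleton, not_or] at htmem
      obtain ⟨htx, hty, htz⟩ := htmem
      have hS0eq : S0 = {(x : V), (y : V), (z : V), t} :=
        eq_four S0 hc4 _ _ _ _ hxS hyS hzS htS a1.ne a3.ne' (Ne.symm htx) a2.ne
          (Ne.symm hty) (Ne.symm htz)
      obtain ⟨T, hT1, hT2, hT3⟩ := caseTriangle4 h7 hnb S0 hmin A B hcov hAS hBS hABd hnoe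
        hsideA hsideB _ _ _ t a1 a2 a3 htx hty htz hS0eq
      exact ⟨T, hT1, hT2.trans hS0κ, hT3⟩
  · -- 4-cycle in the cut
    have hwS : (w : V) ∈ S0 := by have := w.2; simpa using this
    have hxS : (x : V) ∈ S0 := by have := x.2; simpa using this
    have hyS : (y : V) ∈ S0 := by have := y.2; simpa using this
    have hzS : (z : V) ∈ S0 := by have := z.2; simpa using this
    have b1 : G.Adj (w : V) (x : V) := by simpa using h1
    have b2 : G.Adj (x : V) (y : V) := by simpa using h2
    have b3 : G.Adj (y : V) (z : V) := by simpa using h3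
    have b4 : G.Adj (z : V) (w : V) := by simpa using h4
    have hne1' : (w : V) ≠ (y : V) := fun h => hne1 (Subtype.ext h)
    have hne2' : (x : V) ≠ (z : V) := fun h => hne2 (Subtype.ext h)
    have hsub4 : ({(w : V), (x : V), (y : V), (z : V)} : Finset V) ⊆ S0 := by
      intro a ha
      simp only [Finset.mem_insert, Finset.mem_singleton] at ha
      rcases ha with rfl | rfl | rfl | rfl <;> assumption
    have hc4' : ({(w : V), (x : V), (y : V), (z : V)} : Finset V).card = 4 :=
      card_four _ _ _ _ b1.ne hne1' b4.ne' b2.ne hne2' b3.ne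
    have hS0eq : S0 = {(w : V), (x : V), (y : V), (z : V)} :=
      (Finset.eq_of_subset_of_card_le hsub4 (by omega)).symm
    obtain ⟨T, hT1, hT2, hT3⟩ := caseC4 h7 hnb S0 hmin A B hcov hAS hBS hABd hnoe
      hsideA hsideB _ _ _ _ b1 b2 b3 b4 hne1' hne2' hS0eq
    exact ⟨T, hT1, hT2.trans hS0κ, hT3⟩
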